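/- arXiv:1910.05936 — 2 statements merged into one kernel-verified Lean document; each statement's English description precedes it below -/
import Mathlib

section
/- Let n ≥ 1 and let S be a sequence over Z/2Z of length n-1. Then the Steinhaus graph G(S) is even (every vertex has even degree) if and only if the Steinhaus triangle θ(G(S)) = ∇(∫_{n,0} ir(S)) of size 2n-1 is dihedrally symmetric. -/
open Finset

namespace Steinhaus

/-- Extended binomial coefficient `C(a,b)` for integers `a`, `b`:
`C(a,0) = 1`, `C(0,b) = 0` for `b > 0`, Pascal's rule everywhere; in particular
`C(a,b) = 0` for `b < 0` and `C(a,b) = (-1)^b C(b-a-1,b)` for `a < 0 ≤ b`. -/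
def ibinom (a b : ℤ) : ℤ :=
  if b < 0 then 0
  else if 0 ≤ a then (a.toNat.choose b.toNat : ℤ)
  else (-1) ^ b.toNat * ((b - a - 1).toNat.choose b.toNat : ℤ)

/-- `(i,j)` is an index of the triangle of size `n`, i.e. `1 ≤ i ≤ j ≤ n`. -/
def InTri (n i j : ℕ) : Prop := 1 ≤ i ∧ i ≤ j ∧ j ≤ n

instance (n i j : ℕ) : Decidable (InTri n i j) :=
  inferInstanceAs (Decidable (1 ≤ i ∧ i ≤ j ∧ j ≤ n))

/-- The `ZMod 2`-vector space of binary Steinhaus triangles of size `n`,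
realized as functions `ℕ → ℕ → ZMod 2` vanishing outside the triangle
`{(i,j) | 1 ≤ i ≤ j ≤ n}` and satisfying the local rule
`a i j = a (i-1) (j-1) + a (i-1) j` inside it. -/
def ST (n : ℕ) : Submodule (ZMod 2) (ℕ → ℕ → ZMod 2) where
  carrier := {a | (∀ i j, ¬ InTri n i j → a i j = 0) ∧
    ∀ i j, 2 ≤ i → i ≤ j → j ≤ n → a i j = a (i - 1) (j - 1) + a (i - 1) j}
  add_mem' := by
    rintro a b ⟨ha0, ha1⟩ ⟨hb0, hb1⟩
    refine ⟨fun i j h => ?_, fun i j h2 hij hjn => ?_⟩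
    · simp only [Pi.add_apply, ha0 i j h, hb0 i j h, add_zero]
    · simp only [Pi.add_apply, ha1 i j h2 hij hjn, hb1 i j h2 hij hjn]
      ring
  zero_mem' := ⟨fun _ _ _ => rfl, fun _ _ _ _ _ => by simp⟩
  smul_mem' := by
    rintro c a ⟨ha0, ha1⟩
    refine ⟨fun i j h => ?_, fun i j h2 hij hjn => ?_⟩
    · simp only [Pi.smul_apply, ha0 i j h, smul_zero]
    · simp only [Pi.smul_apply, ha1 i j h2 hij hjn, smul_add]

/-- The first row of the triangle `a` (of size `n`) is the sequence `S`;
equivalently, `a = ∇S`. -/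
def FirstRow (n : ℕ) (a : ℕ → ℕ → ZMod 2) (S : ℕ → ZMod 2) : Prop :=
  ∀ j, 1 ≤ j → j ≤ n → a 1 j = S j

/-- The rotation `r` by 120 degrees: `r(a)_{i,j} = a_{j-i+1, n-i+1}`. -/
def rot (n : ℕ) (a : ℕ → ℕ → ZMod 2) : ℕ → ℕ → ZMod 2 :=
  fun i j => if InTri n i j then a (j - i + 1) (n - i + 1) else 0

/-- The horizontal reflection `h`: `h(a)_{i,j} = a_{i, n-j+i}`. -/
def hrefl (n : ℕ) (a : ℕ → ℕ → ZMod 2) : ℕ → ℕ → ZMod 2 :=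
  fun i j => if InTri n i j then a i (n - j + i) else 0

lemma rot_add (n : ℕ) (a b : ℕ → ℕ → ZMod 2) :
    rot n (a + b) = rot n a + rot n b := by
  funext i j
  simp only [rot, Pi.add_apply]
  split_ifs <;> simp

lemma rot_smul (n : ℕ) (c : ZMod 2) (a : ℕ → ℕ → ZMod 2) :
    rot n (c • a) = c • rot n a := by
  funext i j
  simp only [rot, Pi.smul_apply]
  split_ifs <;> simp

lemma hrefl_add (n : ℕ) (a b : ℕ → ℕ → ZMod 2) :
    hrefl n (a + b) = hrefl n a + hrefl n b := by
  funext i j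
  simp only [hrefl, Pi.add_apply]
  split_ifs <;> simp

lemma hrefl_smul (n : ℕ) (c : ZMod 2) (a : ℕ → ℕ → ZMod 2) :
    hrefl n (c • a) = c • hrefl n a := by
  funext i j
  simp only [hrefl, Pi.smul_apply]
  split_ifs <;> simp

/-- The linear map `ρ = r² + r + id`. -/
def rho (n : ℕ) (a : ℕ → ℕ → ZMod 2) : ℕ → ℕ → ZMod 2 :=
  rot n (rot n a) + rot n a + a

/-- The subspace of rotationally symmetric Steinhaus triangles (fixed by `r`). -/
def RST (n : ℕ) : Submodule (ZMod 2) (ℕ → ℕ → ZMod 2) where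
  carrier := {a | a ∈ ST n ∧ rot n a = a}
  add_mem' := by
    rintro a b ⟨ha, ha'⟩ ⟨hb, hb'⟩
    exact ⟨add_mem ha hb, by rw [rot_add, ha', hb']⟩
  zero_mem' := ⟨zero_mem _, by funext i j; simp [rot]⟩
  smul_mem' := by
    rintro c a ⟨ha, ha'⟩
    exact ⟨Submodule.smul_mem _ c ha, by rw [rot_smul, ha']⟩

/-- The subspace of horizontally symmetric Steinhaus triangles (fixed by `h`). -/
def HST (n : ℕ) : Submodule (ZMod 2) (ℕ → ℕ → ZMod 2) where
  carrier := {a | a ∈ ST n ∧ hrefl n a = a}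
  add_mem' := by
    rintro a b ⟨ha, ha'⟩ ⟨hb, hb'⟩
    exact ⟨add_mem ha hb, by rw [hrefl_add, ha', hb']⟩
  zero_mem' := ⟨zero_mem _, by funext i j; simp [hrefl]⟩
  smul_mem' := by
    rintro c a ⟨ha, ha'⟩
    exact ⟨Submodule.smul_mem _ c ha, by rw [hrefl_smul, ha']⟩

/-- The subspace of dihedrally symmetric Steinhaus triangles (fixed by `r` and `h`). -/
def DST (n : ℕ) : Submodule (ZMod 2) (ℕ → ℕ → ZMod 2) where
  carrier := {a | a ∈ ST n ∧ rot n a = a ∧ hrefl n a = a}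
  add_mem' := by
    rintro a b ⟨ha, ha', ha''⟩ ⟨hb, hb', hb''⟩
    exact ⟨add_mem ha hb, by rw [rot_add, ha', hb'], by rw [hrefl_add, ha'', hb'']⟩
  zero_mem' := ⟨zero_mem _, by funext i j; simp [rot], by funext i j; simp [hrefl]⟩
  smul_mem' := by
    rintro c a ⟨ha, ha', ha''⟩
    exact ⟨Submodule.smul_mem _ c ha, by rw [rot_smul, ha'],
      by rw [hrefl_smul, ha'']⟩

/-- `σ₂`: the sum of the first `n` terms of a sequence over `ZMod 2`. -/
def seqSum (n : ℕ) (S : ℕ → ZMod 2) : ZMod 2 := ∑ j ∈ Finset.Icc 1 n, S j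

/-- The subspace `DST₀(n)` of dihedrally symmetric Steinhaus triangles whose
first row has zero sum. -/
def DST0 (n : ℕ) : Submodule (ZMod 2) (ℕ → ℕ → ZMod 2) where
  carrier := {a | a ∈ DST n ∧ seqSum n (a 1) = 0}
  add_mem' := by
    rintro a b ⟨ha, ha'⟩ ⟨hb, hb'⟩
    refine ⟨add_mem ha hb, ?_⟩
    have h : seqSum n ((a + b) 1) = seqSum n (a 1) + seqSum n (b 1) := by
      simp [seqSum, Finset.sum_add_distrib]
    rw [h, ha', hb', add_zero]
  zero_mem' := ⟨zero_mem _, by simp [seqSum]⟩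
  smul_mem' := by
    rintro c a ⟨ha, ha'⟩
    refine ⟨Submodule.smul_mem _ c ha, ?_⟩
    have h : seqSum n ((c • a) 1) = c • seqSum n (a 1) := by
      simp [seqSum, smul_eq_mul, Finset.mul_sum]
    rw [h, ha', smul_zero]

/-- The derived sequence `∂S`. -/
def der (S : ℕ → ZMod 2) : ℕ → ZMod 2 := fun j => S j + S (j + 1)

/-- The antiderived sequence `∫_{i,x} S`, whose `j`-th term is
`x + Σ_{k=1}^{i-1} S k + Σ_{k=1}^{j-1} S k`. -/
def antider (i : ℕ) (x : ZMod 2) (S : ℕ → ZMod 2) : ℕ → ZMod 2 :=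
  fun j => x + (∑ k ∈ Finset.Ico 1 i, S k) + (∑ k ∈ Finset.Ico 1 j, S k)

/-- A sequence of length `n` is symmetric. -/
def SymmSeq (n : ℕ) (S : ℕ → ZMod 2) : Prop :=
  ∀ j, 1 ≤ j → j ≤ n → S (n - j + 1) = S j

/-- The binomial sequence `bs(k,l)` whose `j`-th term is `C(l+j-1, k) mod 2`. -/
def bseq (k l : ℤ) : ℕ → ZMod 2 := fun j => ((ibinom (l + (j : ℤ) - 1) k : ℤ) : ZMod 2)

/-- The map `H : ST(n) → ST(n-3)` removing the first row and the two sides. -/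
def Hmap (n : ℕ) (a : ℕ → ℕ → ZMod 2) : ℕ → ℕ → ZMod 2 :=
  fun i j => if InTri (n - 3) i j then a (1 + i) (2 + j) else 0

/-- The projection `π_G` of a subspace `V` of triangles onto coordinates in `G`. -/
def proj (V : Submodule (ZMod 2) (ℕ → ℕ → ZMod 2)) (G : Set (ℕ × ℕ)) :
    V →ₗ[ZMod 2] (G → ZMod 2) where
  toFun a := fun p => (a : ℕ → ℕ → ZMod 2) p.1.1 p.1.2
  map_add' := fun _ _ => rfl
  map_smul' := fun _ _ => rfl

/-- `G` is a generating index set of the subspace `V` of `ST(n)`: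
`G` consists of triangle indices and `π_G : V → (ZMod 2)^G` is an isomorphism. -/
def IsGenIndexSet (n : ℕ) (V : Submodule (ZMod 2) (ℕ → ℕ → ZMod 2))
    (G : Set (ℕ × ℕ)) : Prop :=
  (∀ p ∈ G, InTri n p.1 p.2) ∧ Function.Bijective (proj V G)

end Steinhaus
namespace Steinhaus

/-- The Steinhaus triangle `∇S` of size `n` generated by the first row `S`,
given by `(∇S)_{i,j} = Σ_{k=0}^{i-1} C(i-1,k) S_{j-k}`. -/
def nabla (n : ℕ) (S : ℕ → ZMod 2) : ℕ → ℕ → ZMod 2 :=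
  fun i j => if InTri n i j then
    ∑ k ∈ Finset.range i, ((i - 1).choose k : ZMod 2) * S (j - k) else 0

/-- The interlacing `ir(S)` of a sequence `S` of length `n-1` and its reverse:
`ir(S)_{2j-1} = S_j` and `ir(S)_{2j} = S_{n-j}`. -/
def ir (n : ℕ) (S : ℕ → ZMod 2) : ℕ → ZMod 2 :=
  fun j => if j % 2 = 1 then S ((j + 1) / 2) else S (n - j / 2)

/-- `M` is the adjacency matrix (over `ZMod 2`) of the Steinhaus graph `G(S)`
of order `n` associated with the sequence `S` of length `n-1`. -/
def IsSteinhausAdj (n : ℕ) (S : ℕ → ZMod 2) (M : ℕ → ℕ → ZMod 2) : Prop :=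
  (∀ i j, 1 ≤ i → i ≤ n → 1 ≤ j → j ≤ n → M i j = M j i) ∧
  (∀ i, 1 ≤ i → i ≤ n → M i i = 0) ∧
  (∀ j, 2 ≤ j → j ≤ n → M 1 j = S (j - 1)) ∧
  (∀ i j, 2 ≤ i → i < j → j ≤ n → M i j = M (i - 1) (j - 1) + M (i - 1) j)

/-- Every vertex of the graph with adjacency matrix `M` (order `n`) has even degree. -/
def EvenAdj (n : ℕ) (M : ℕ → ℕ → ZMod 2) : Prop :=
  ∀ i, 1 ≤ i → i ≤ n → Even (((Finset.Icc 1 n).filter (fun j => M i j = 1)).card)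

end Steinhaus
namespace Steinhaus

lemma aux_z2 (x : ZMod 2) : x + x = 0 := by fin_cases x <;> decide

lemma aux_sum_shift (f : ℕ → ZMod 2) (a b : ℕ) (hab : a ≤ b) :
    (∑ k ∈ Ico (a+1) (b+1), f k) + ∑ k ∈ Ico a b, f k = f a + f b := by
  induction b, hab using Nat.le_induction with
  | base => simp [aux_z2]
  | succ b hb ih =>
    rw [Finset.sum_Ico_succ_top (Nat.succ_le_succ hb) f, Finset.sum_Ico_succ_top hb f]
    linear_combination ih + aux_z2 (f b)

lemma aux_even_card_iff_sum (s : Finset ℕ) (f : ℕ → ZMod 2) :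
    Even (s.filter (fun j => f j = 1)).card ↔ ∑ j ∈ s, f j = 0 := by
  have h1 : ((s.filter (fun j => f j = 1)).card : ZMod 2) = ∑ j ∈ s, f j := by
    rw [Finset.card_filter, Nat.cast_sum]
    refine Finset.sum_congr rfl fun j _ => ?_
    have : ∀ x : ZMod 2, ((if x = 1 then 1 else 0 : ℕ) : ZMod 2) = x := by decide
    exact this (f j)
  rw [← h1]
  constructor
  · rintro ⟨k, hk⟩
    rw [hk]; push_cast; rw [aux_z2]
  · intro h
    rcases Nat.even_or_odd (s.filter (fun j => f j = 1)).card with he | ho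
    · exact he
    · exfalso
      obtain ⟨k, hk⟩ := ho
      rw [hk] at h
      push_cast at h
      have h2 : (2 : ZMod 2) = 0 := rfl
      rw [h2] at h
      simp at h

lemma aux_ST_unique {m : ℕ} {a a' : ℕ → ℕ → ZMod 2} (ha : a ∈ ST m) (ha' : a' ∈ ST m)
    (h : ∀ j, 1 ≤ j → j ≤ m → a 1 j = a' 1 j) : a = a' := by
  obtain ⟨ha0, ha1⟩ := ha
  obtain ⟨ha0', ha1'⟩ := ha'
  suffices hh : ∀ i j, a i j = a' i j by funext i j; exact hh i j
  intro i
  induction i with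
  | zero =>
    intro j
    rw [ha0 0 j (by simp [InTri]), ha0' 0 j (by simp [InTri])]
  | succ i ih =>
    intro j
    by_cases hin : InTri m (i+1) j
    · obtain ⟨h1, h2, h3⟩ := hin
      rcases Nat.eq_zero_or_pos i with h0 | h0
      · subst h0; exact h j h2 h3
      · rw [ha1 (i+1) j (by omega) h2 h3, ha1' (i+1) j (by omega) h2 h3]
        simp only [Nat.add_sub_cancel]
        rw [ih (j-1), ih j]
    · rw [ha0 _ _ hin, ha0' _ _ hin]

lemma aux_hrefl_mem {m : ℕ} {a : ℕ → ℕ → ZMod 2} (ha : a ∈ ST m) : hrefl m a ∈ ST m := by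
  obtain ⟨ha0, ha1⟩ := ha
  constructor
  · intro i j h
    simp [hrefl, h]
  · intro i j h2 hij hjm
    have hin : InTri m i j := ⟨by omega, hij, hjm⟩
    have hin1 : InTri m (i-1) (j-1) := ⟨by omega, by omega, by omega⟩
    have hin2 : InTri m (i-1) j := ⟨by omega, by omega, hjm⟩
    simp only [hrefl, if_pos hin, if_pos hin1, if_pos hin2]
    have e1 : m - (j-1) + (i-1) = m - j + i := by omega
    have e2 : m - j + (i-1) = m - j + i - 1 := by omega
    rw [e1, e2]
    have := ha1 i (m - j + i) h2 (by omega) (by omega)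
    have e3 : m - j + i - 1 = m - j + i - 1 := rfl
    rw [this]
    ring

lemma aux_rot_mem {m : ℕ} {a : ℕ → ℕ → ZMod 2} (ha : a ∈ ST m) : rot m a ∈ ST m := by
  obtain ⟨ha0, ha1⟩ := ha
  constructor
  · intro i j h
    simp [rot, h]
  · intro i j h2 hij hjm
    have hin : InTri m i j := ⟨by omega, hij, hjm⟩
    have hin1 : InTri m (i-1) (j-1) := ⟨by omega, by omega, by omega⟩
    have hin2 : InTri m (i-1) j := ⟨by omega, by omega, hjm⟩
    simp only [rot, if_pos hin, if_pos hin1, if_pos hin2]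
    have e1 : j - 1 - (i-1) + 1 = j - i + 1 := by omega
    have e2 : m - (i-1) + 1 = m - i + 2 := by omega
    have e3 : j - (i-1) + 1 = j - i + 2 := by omega
    rw [e1, e2, e3]
    have hr := ha1 (j - i + 2) (m - i + 2) (by omega) (by omega) (by omega)
    have e4 : j - i + 2 - 1 = j - i + 1 := by omega
    have e5 : m - i + 2 - 1 = m - i + 1 := by omega
    rw [e4, e5] at hr
    linear_combination -hr - aux_z2 (a (j - i + 1) (m - i + 2))

lemma aux_c_palin (n : ℕ) (S : ℕ → ZMod 2) (k : ℕ) (hk1 : 1 ≤ k) (hk2 : k ≤ 2*n-2) :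
    ir n S (2*n-1-k) = ir n S k := by
  have hn : 2 ≤ n := by omega
  simp only [ir]
  by_cases hk : k % 2 = 1
  · rw [if_pos hk, if_neg (by omega)]
    congr 1
    omega
  · rw [if_neg hk, if_pos (by omega)]
    congr 1
    omega

lemma aux_b_succ (n : ℕ) (S : ℕ → ZMod 2) (j : ℕ) (hj : 1 ≤ j) :
    antider n 0 (ir n S) (j+1) = antider n 0 (ir n S) j + ir n S j := by
  simp only [antider]
  rw [Finset.sum_Ico_succ_top hj]
  ring

lemma aux_b_sym (n : ℕ) (hn : 1 ≤ n) (S : ℕ → ZMod 2) (j : ℕ) (hj1 : 1 ≤ j) (hj2 : j ≤ 2*n-1) :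
    antider n 0 (ir n S) (2*n-1-j+1) = antider n 0 (ir n S) j := by
  have main : ∀ j, 1 ≤ j → j ≤ n → antider n 0 (ir n S) (2*n-1-j+1) = antider n 0 (ir n S) j := by
    intro j hj1 hjn
    simp only [antider]
    have hsplit : ∑ k ∈ Ico 1 (2*n-1-j+1), ir n S k
        = (∑ k ∈ Ico 1 j, ir n S k) + ∑ k ∈ Ico j (2*n-1-j+1), ir n S k :=
      (Finset.sum_Ico_consecutive _ hj1 (by omega)).symm
    have hzero : ∑ k ∈ Ico j (2*n-1-j+1), ir n S k = 0 := by
      apply Finset.sum_involution (g := fun a _ => 2*n-1-a)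
      · intro a ha
        simp only [Finset.mem_Ico] at ha
        rw [aux_c_palin n S a (by omega) (by omega)]
        exact aux_z2 _
      · intro a ha _
        simp only [Finset.mem_Ico] at ha
        omega
      · intro a ha
        simp only [Finset.mem_Ico] at ha ⊢
        omega
      · intro a ha
        simp only [Finset.mem_Ico] at ha
        omega
    rw [hsplit, hzero, add_zero]
  rcases le_or_gt j n with hc | hc
  · exact main j hj1 hc
  · have h2 := main (2*n-1-j+1) (by omega) (by omega)
    have e : 2*n-1-(2*n-1-j+1)+1 = j := by omega
    rw [e] at h2
    exact h2.symm

lemma aux_sigma_eq (n : ℕ) (S : ℕ → ZMod 2) :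
    ∑ k ∈ Ico 1 n, ir n S k = ∑ j ∈ Icc 1 (n-1), S j := by
  refine Finset.sum_nbij' (fun k => if k % 2 = 1 then (k+1)/2 else n - k/2)
    (fun j => if 2*j ≤ n then 2*j-1 else 2*(n-j)) ?_ ?_ ?_ ?_ ?_
  · intro a ha
    simp only [Finset.mem_Ico] at ha
    simp only [Finset.mem_Icc]
    split_ifs with h <;> omega
  · intro a ha
    simp only [Finset.mem_Icc] at ha
    simp only [Finset.mem_Ico]
    split_ifs with h <;> omega
  · intro a ha
    simp only [Finset.mem_Ico] at ha
    split_ifs with h1 h2 h3 <;> omega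
  · intro a ha
    simp only [Finset.mem_Icc] at ha
    split_ifs with h1 h2 h3 <;> omega
  · intro a ha
    simp only [ir]
    split_ifs with h <;> rfl

section Mlemmas

variable {n : ℕ} {S : ℕ → ZMod 2} {M : ℕ → ℕ → ZMod 2}

lemma aux_shift_sum_eq (f : ℕ → ZMod 2) (a b : ℕ) (hab : a ≤ b) :
    (∑ k ∈ Ico (a+1) (b+1), f k) + ∑ k ∈ Ico a b, f k = f a + f b :=
  aux_sum_shift f a b hab

lemma aux_sum_shift_index (f : ℕ → ZMod 2) (a b : ℕ) :
    ∑ k ∈ Ico a b, f (k+1) = ∑ k ∈ Ico (a+1) (b+1), f k := by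
  refine Finset.sum_nbij' (fun k => k + 1) (fun k => k - 1) ?_ ?_ ?_ ?_ ?_ <;>
    intro x hx <;> simp only [Finset.mem_Ico] at * <;> omega

lemma aux_sum_shift_index' (f : ℕ → ZMod 2) (a b : ℕ) (ha : 1 ≤ a) :
    ∑ k ∈ Ico a b, f (k-1) = ∑ k ∈ Ico (a-1) (b-1), f k := by
  refine Finset.sum_nbij' (fun k => k - 1) (fun k => k + 1) ?_ ?_ ?_ ?_ ?_ <;>
    intro x hx <;> simp only [Finset.mem_Ico] at * <;> omega

lemma aux_Hcol (hM : IsSteinhausAdj n S M) (i : ℕ) (hi1 : 1 ≤ i) (hi2 : i + 1 ≤ n) :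
    ∑ k ∈ Ico 1 i, M k i = M 1 (i+1) + M i (i+1) := by
  have step : ∀ k ∈ Ico 1 i, M k i = M (k+1) (i+1) + M k (i+1) := by
    intro k hk
    simp only [Finset.mem_Ico] at hk
    have h := hM.2.2.2 (k+1) (i+1) (by omega) (by omega) (by omega)
    simp only [Nat.add_sub_cancel] at h
    linear_combination -h - aux_z2 (M k (i+1))
  rw [Finset.sum_congr rfl step, Finset.sum_add_distrib]
  rw [aux_sum_shift_index (fun k => M k (i+1)) 1 i]
  exact aux_sum_shift (fun k => M k (i+1)) 1 i hi1

lemma aux_Trow (hM : IsSteinhausAdj n S M) (i : ℕ) (hi1 : 1 ≤ i) (hi2 : i + 1 ≤ n) :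
    ∑ j ∈ Ico (i+2) (n+1), M (i+1) j = M i (i+1) + M i n := by
  have step : ∀ j ∈ Ico (i+2) (n+1), M (i+1) j = M i (j-1) + M i j := by
    intro j hj
    simp only [Finset.mem_Ico] at hj
    have h := hM.2.2.2 (i+1) j (by omega) (by omega) (by omega)
    simpa only [Nat.add_sub_cancel] using h
  rw [Finset.sum_congr rfl step, Finset.sum_add_distrib]
  rw [aux_sum_shift_index' (fun j => M i j) (i+2) (n+1) (by omega)]
  have e1 : i + 2 - 1 = i + 1 := by omega
  have e2 : n + 1 - 1 = n := by omega
  rw [e1, e2]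
  have := aux_sum_shift (fun j => M i j) (i+1) n (by omega)
  linear_combination this

lemma aux_Dsplit (hM : IsSteinhausAdj n S M) (i : ℕ) (hi1 : 1 ≤ i) (hi2 : i ≤ n) :
    ∑ j ∈ Icc 1 n, M i j = (∑ k ∈ Ico 1 i, M k i) + ∑ j ∈ Ico (i+1) (n+1), M i j := by
  have e : Icc 1 n = Ico 1 (n+1) := by rw [Finset.Ico_add_one_right_eq_Icc]
  rw [e]
  rw [← Finset.sum_Ico_consecutive (fun j => M i j) (show 1 ≤ i by omega) (show i ≤ n+1 by omega)]
  rw [Finset.sum_eq_sum_Ico_succ_bot (show i < n+1 by omega) (fun j => M i j)]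
  rw [hM.2.1 i hi1 hi2, zero_add]
  congr 1
  refine Finset.sum_congr rfl fun j hj => ?_
  simp only [Finset.mem_Ico] at hj
  exact hM.1 i j hi1 hi2 (by omega) (by omega)

lemma aux_handshake (hM : IsSteinhausAdj n S M) :
    ∑ i ∈ Icc 1 n, ∑ j ∈ Icc 1 n, M i j = 0 := by
  rw [← Finset.sum_product']
  apply Finset.sum_involution (g := fun p _ => (p.2, p.1))
  · intro p hp
    simp only [Finset.mem_product, Finset.mem_Icc] at hp
    rw [hM.1 p.1 p.2 hp.1.1 hp.1.2 hp.2.1 hp.2.2]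
    exact aux_z2 _
  · intro p hp hne
    simp only [Finset.mem_product, Finset.mem_Icc] at hp
    intro heq
    have h1 : p.2 = p.1 := by
      have := congrArg Prod.fst heq
      simpa using this
    rw [h1, hM.2.1 p.1 hp.1.1 hp.1.2] at hne
    exact hne rfl
  · intro p hp
    simp only [Finset.mem_product, Finset.mem_Icc] at hp ⊢
    exact ⟨hp.2, hp.1⟩
  · intro p hp
    rfl

lemma aux_D1 (hM : IsSteinhausAdj n S M) (hn : 1 ≤ n) :
    ∑ j ∈ Icc 1 n, M 1 j = ∑ j ∈ Icc 1 (n-1), S j := by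
  have e : Icc 1 n = Ico 1 (n+1) := by rw [Finset.Ico_add_one_right_eq_Icc]
  rw [e]
  rw [Finset.sum_eq_sum_Ico_succ_bot (show 1 < n+1 by omega) (fun j => M 1 j)]
  rw [hM.2.1 1 le_rfl hn, zero_add]
  have step : ∀ j ∈ Ico 2 (n+1), M 1 j = S (j-1) := by
    intro j hj
    simp only [Finset.mem_Ico] at hj
    exact hM.2.2.1 j (by omega) (by omega)
  rw [Finset.sum_congr rfl step]
  rw [aux_sum_shift_index' S 2 (n+1) (by omega)]
  have e2 : Icc 1 (n-1) = Ico 1 n := by rw [← Finset.Ico_add_one_right_eq_Icc]; congr 1; omega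
  rw [e2]
  norm_num

lemma aux_Dsplit4 (hM : IsSteinhausAdj n S M) (i : ℕ) (h2 : 2 ≤ i) (hin : i + 1 ≤ n) :
    ∑ j ∈ Icc 1 n, M i j = M 1 (i+1) + M i (i+1) + (M (i-1) i + M (i-1) n) := by
  rw [aux_Dsplit hM i (by omega) (by omega)]
  rw [aux_Hcol hM i (by omega) hin]
  have h := aux_Trow hM (i-1) (by omega) (by omega)
  have e1 : i - 1 + 2 = i + 1 := by omega
  have e2 : i - 1 + 1 = i := by omega
  rw [e1, e2] at h
  rw [h]

end Mlemmas

section Crux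

variable {n : ℕ} {S : ℕ → ZMod 2} {M : ℕ → ℕ → ZMod 2}

/-- The condition `C_k` : `M k n = M k (k+2) + M 1 (k+2)`. -/
def Ccond (n : ℕ) (M : ℕ → ℕ → ZMod 2) : Prop :=
  ∀ k, 1 ≤ k → k ≤ n - 2 → M k n = M k (k+2) + M 1 (k+2)

lemma aux_C' (hM : IsSteinhausAdj n S M) (hC : Ccond n M) :
    ∀ r k, 1 ≤ k → k + r ≤ n - 2 → M k (n - r) = M k (k+r+2) + M (r+1) (k+r+2) := by
  intro r
  induction r with
  | zero =>
    intro k hk1 hk2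
    simpa using hC k hk1 (by omega)
  | succ r ih =>
    intro k hk1 hk2
    have hn : k + r + 3 ≤ n := by omega
    have h1 := ih k hk1 (by omega)
    have h2 := ih (k+1) (by omega) (by omega)
    have ra : M (k+1) (n-r) = M k (n-r-1) + M k (n-r) := by
      have h := hM.2.2.2 (k+1) (n-r) (by omega) (by omega) (by omega)
      simpa only [Nat.add_sub_cancel] using h
    have rb : M (k+1) (k+r+3) = M k (k+r+2) + M k (k+r+3) := by
      have h := hM.2.2.2 (k+1) (k+r+3) (by omega) (by omega) (by omega)
      have e1 : k + r + 3 - 1 = k + r + 2 := by omega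
      simpa only [Nat.add_sub_cancel, e1] using h
    have rc : M (r+2) (k+r+3) = M (r+1) (k+r+2) + M (r+1) (k+r+3) := by
      have h := hM.2.2.2 (r+2) (k+r+3) (by omega) (by omega) (by omega)
      have e1 : k + r + 3 - 1 = k + r + 2 := by omega
      have e2 : r + 2 - 1 = r + 1 := by omega
      simpa only [e1, e2] using h
    have e3 : k + 1 + r + 2 = k + r + 3 := by omega
    have e4 : k + (r+1) + 2 = k + r + 3 := by omega
    have e5 : n - (r+1) = n - r - 1 := by omega
    rw [e3] at h2
    rw [e4, e5]
    linear_combination -ra + h2 - h1 + rb - rc - aux_z2 (M (r+1) (k+r+2))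

lemma aux_Bsmall (hM : IsSteinhausAdj n S M) (hC : Ccond n M) :
    ∀ k, 1 ≤ k → k ≤ n - 2 → M k n = S (n - k) := by
  intro k hk1 hk2
  have hSn : S (n - k) = M 1 (n-k+1) := by
    have h := hM.2.2.1 (n-k+1) (by omega) (by omega)
    have e : n - k + 1 - 1 = n - k := by omega
    rw [e] at h
    exact h.symm
  rcases Nat.eq_or_lt_of_le hk1 with h1 | h1
  · -- k = 1
    subst h1
    exact hM.2.2.1 n (by omega) le_rfl
  · -- 2 ≤ k
    have hc1 := aux_C' hM hC (k-1) 1 le_rfl (by omega)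
    have e1 : 1 + (k-1) + 2 = k + 2 := by omega
    have e2 : (k-1) + 1 = k := by omega
    rw [e1, e2] at hc1
    have hc0 := hC k hk1 hk2
    rw [hSn]
    have e3 : n - (k-1) = n - k + 1 := by omega
    rw [e3] at hc1
    linear_combination hc0 - hc1

lemma aux_Dsmall (hM : IsSteinhausAdj n S M) (hn : 1 ≤ n)
    (hσ : ∑ j ∈ Icc 1 (n-1), S j = 0) (hC : Ccond n M) :
    ∀ i, 1 ≤ i → i ≤ n - 1 → ∑ j ∈ Icc 1 n, M i j = 0 := by
  intro i hi1 hi2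
  rcases Nat.eq_or_lt_of_le hi1 with h1 | h1
  · rw [← h1, aux_D1 hM hn, hσ]
  · have h4 := aux_Dsplit4 hM i (by omega) (by omega)
    have hc := hC (i-1) (by omega) (by omega)
    have e1 : i - 1 + 2 = i + 1 := by omega
    rw [e1] at hc
    have hr : M i (i+1) = M (i-1) i + M (i-1) (i+1) := by
      have h := hM.2.2.2 i (i+1) (by omega) (by omega) (by omega)
      simpa only [Nat.add_sub_cancel] using h
    rw [h4]
    linear_combination hc + hr + aux_z2 (M 1 (i+1)) + aux_z2 (M (i-1) i)
      + aux_z2 (M (i-1) (i+1))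

lemma aux_Dn (hM : IsSteinhausAdj n S M) (hn : 1 ≤ n)
    (hsmall : ∀ i, 1 ≤ i → i ≤ n - 1 → ∑ j ∈ Icc 1 n, M i j = 0) :
    ∑ j ∈ Icc 1 n, M n j = 0 := by
  have hh := aux_handshake hM
  have h2 := Finset.sum_erase_add (Icc 1 n) (fun i => ∑ j ∈ Icc 1 n, M i j)
    (show n ∈ Icc 1 n by simp [hn])
  rw [hh] at h2
  have hz : ∑ i ∈ (Icc 1 n).erase n, ∑ j ∈ Icc 1 n, M i j = 0 := by
    apply Finset.sum_eq_zero
    intro i hi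
    simp only [Finset.mem_erase, Finset.mem_Icc] at hi
    exact hsmall i hi.2.1 (by omega)
  rw [hz, zero_add] at h2
  exact h2

lemma aux_B (hM : IsSteinhausAdj n S M) (hn : 1 ≤ n)
    (hσ : ∑ j ∈ Icc 1 (n-1), S j = 0) (hC : Ccond n M) :
    ∀ k, 1 ≤ k → k ≤ n - 1 → M k n = S (n - k) := by
  intro k hk1 hk2
  rcases Nat.lt_or_ge k (n-1) with h1 | h1
  · exact aux_Bsmall hM hC k hk1 (by omega)
  · -- k = n - 1, n ≥ 2
    have hk : k = n - 1 := by omega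
    have hn2 : 2 ≤ n := by omega
    subst hk
    have hDn := aux_Dn hM hn (aux_Dsmall hM hn hσ hC)
    rw [aux_Dsplit hM n (by omega) le_rfl] at hDn
    have hz2 : ∑ j ∈ Ico (n+1) (n+1), M n j = 0 := by simp
    rw [hz2, add_zero] at hDn
    have esplit : ∑ k ∈ Ico 1 n, M k n
        = (∑ k ∈ Ico 1 (n-1), M k n) + M (n-1) n := by
      have e : n = (n-1) + 1 := by omega
      rw [e, Finset.sum_Ico_succ_top (by omega)]
      congr 2 <;> omega
    rw [esplit] at hDn
    have hstep : ∀ k ∈ Ico 1 (n-1), M k n = S (n - k) := by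
      intro k hk
      simp only [Finset.mem_Ico] at hk
      exact aux_Bsmall hM hC k hk.1 (by omega)
    have hsum : ∑ k ∈ Ico 1 (n-1), M k n = ∑ j ∈ Ico 2 n, S j := by
      rw [Finset.sum_congr rfl hstep]
      refine Finset.sum_nbij' (fun k => n - k) (fun j => n - j) ?_ ?_ ?_ ?_ ?_ <;>
        intro x hx <;> simp only [Finset.mem_Ico] at * <;> omega
    rw [hsum] at hDn
    have hσ' : S 1 + ∑ j ∈ Ico 2 n, S j = 0 := by
      have e2 : Icc 1 (n-1) = Ico 1 n := by rw [← Finset.Ico_add_one_right_eq_Icc]; congr 1; omega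
      rw [e2, Finset.sum_eq_sum_Ico_succ_bot (show 1 < n by omega) S] at hσ
      exact hσ
    have e3 : n - (n-1) = 1 := by omega
    rw [e3]
    linear_combination hDn - hσ'

end Crux

section EvenIff

variable {n : ℕ} {S : ℕ → ZMod 2} {M : ℕ → ℕ → ZMod 2}

lemma aux_even_iff (hM : IsSteinhausAdj n S M) (hn : 1 ≤ n) :
    EvenAdj n M ↔ ((∑ j ∈ Icc 1 (n-1), S j = 0) ∧ Ccond n M) := by
  constructor
  · intro hE
    have hD : ∀ i, 1 ≤ i → i ≤ n → ∑ j ∈ Icc 1 n, M i j = 0 := by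
      intro i h1 h2
      exact (aux_even_card_iff_sum _ _).1 (hE i h1 h2)
    constructor
    · rw [← aux_D1 hM hn]
      exact hD 1 le_rfl hn
    · intro k hk1 hk2
      have h4 := aux_Dsplit4 hM (k+1) (by omega) (by omega)
      simp only [Nat.add_sub_cancel] at h4
      have e1 : k + 1 + 1 = k + 2 := by omega
      rw [e1] at h4
      have h0 := hD (k+1) (by omega) (by omega)
      rw [h4] at h0
      have hr : M (k+1) (k+2) = M k (k+1) + M k (k+2) := by
        have h := hM.2.2.2 (k+1) (k+2) (by omega) (by omega) (by omega)
        have e2 : k + 2 - 1 = k + 1 := by omega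
        simpa only [Nat.add_sub_cancel, e2] using h
      linear_combination h0 - hr - aux_z2 (M 1 (k+2)) - aux_z2 (M k (k+1))
        - aux_z2 (M k (k+2))
  · rintro ⟨hσ, hC⟩ i h1 h2
    rw [aux_even_card_iff_sum]
    rcases Nat.lt_or_ge i n with h3 | h3
    · exact aux_Dsmall hM hn hσ hC i h1 (by omega)
    · have : i = n := by omega
      subst this
      exact aux_Dn hM hn (aux_Dsmall hM hn hσ hC)

end EvenIff

section Tlayer

variable {n : ℕ} {S : ℕ → ZMod 2} {M : ℕ → ℕ → ZMod 2} {t : ℕ → ℕ → ZMod 2}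

lemma aux_t2 (hn : 1 ≤ n) (ht : t ∈ ST (2*n-1))
    (hrow : FirstRow (2*n-1) t (antider n 0 (ir n S)))
    (j : ℕ) (hj1 : 2 ≤ j) (hj2 : j ≤ 2*n-1) : t 2 j = ir n S (j-1) := by
  have h := ht.2 2 j le_rfl hj1 hj2
  have e : (2:ℕ) - 1 = 1 := rfl
  rw [e] at h
  have hb := aux_b_succ n S (j-1) (by omega)
  have e2 : j - 1 + 1 = j := by omega
  rw [e2] at hb
  rw [hrow (j-1) (by omega) (by omega), hrow j (by omega) hj2, hb] at h
  linear_combination h + aux_z2 (antider n 0 (ir n S) (j-1))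

lemma aux_rowR (hn : 1 ≤ n) (hM : IsSteinhausAdj n S M) (ht : t ∈ ST (2*n-1))
    (hrow : FirstRow (2*n-1) t (antider n 0 (ir n S))) :
    ∀ i, 1 ≤ i → i + 1 ≤ n → ∀ l, 1 ≤ l → i + l ≤ n →
      t (2*i) (2*(i+l) - 2) = M i (i+l) ∧ t (2*i) (2*(i+l) - 1) = M i (n+1-l) := by
  intro i hi1
  induction i, hi1 using Nat.le_induction with
  | base =>
    intro hn2 l hl1 hl2
    constructor
    · have e1 : 2*(1+l) - 2 = 2*l := by omega
      rw [e1]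
      have h := aux_t2 hn ht hrow (2*l) (by omega) (by omega)
      have e2 : 2*l - 1 = 2*(l-1)+1 := by omega
      have hc : ir n S (2*l-1) = S l := by
        simp only [ir]
        rw [if_pos (by omega)]
        congr 1
        omega
      rw [h, hc]
      have hm := hM.2.2.1 (1+l) (by omega) (by omega)
      have e3 : 1 + l - 1 = l := by omega
      rw [e3] at hm
      exact hm.symm
    · have e1 : 2*(1+l) - 1 = 2*l+1 := by omega
      rw [e1]
      have h := aux_t2 hn ht hrow (2*l+1) (by omega) (by omega)
      have hc : ir n S (2*l+1-1) = S (n-l) := by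
        simp only [ir]
        rw [if_neg (by omega)]
        congr 1
        omega
      rw [h, hc]
      have hm := hM.2.2.1 (n+1-l) (by omega) (by omega)
      have e3 : n + 1 - l - 1 = n - l := by omega
      rw [e3] at hm
      exact hm.symm
  | succ i hi ih =>
    intro hn2 l hl1 hl2
    have ihh := ih (by omega)
    have dbl : ∀ j, 2*i+2 ≤ j → j ≤ 2*n-1 → t (2*i+2) j = t (2*i) (j-2) + t (2*i) j := by
      intro j h1 h2
      have r1 := ht.2 (2*i+2) j (by omega) (by omega) h2
      have r2 := ht.2 (2*i+1) (j-1) (by omega) (by omega) (by omega)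
      have r3 := ht.2 (2*i+1) j (by omega) (by omega) h2
      have e1 : 2*i+2-1 = 2*i+1 := by omega
      have e2 : 2*i+1-1 = 2*i := by omega
      have e3 : j - 1 - 1 = j - 2 := by omega
      rw [e1] at r1
      rw [e2, e3] at r2
      rw [e2] at r3
      linear_combination r1 + r2 + r3 + aux_z2 (t (2*i) (j-1))
    constructor
    · have e1 : 2*(i+1) = 2*i+2 := by omega
      have e2 : 2*(i+1+l) - 2 = 2*(i+l) := by omega
      rw [e1, e2]
      have hd := dbl (2*(i+l)) (by omega) (by omega)
      have hA1 := (ihh l hl1 (by omega)).1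
      have hA2 := (ihh (l+1) (by omega) (by omega)).1
      have e3 : 2*(i+(l+1)) - 2 = 2*(i+l) := by omega
      have e4 : i + (l+1) = i + l + 1 := by omega
      rw [e3, e4] at hA2
      have hr : M (i+1) (i+l+1) = M i (i+l) + M i (i+l+1) := by
        have h := hM.2.2.2 (i+1) (i+l+1) (by omega) (by omega) (by omega)
        have e5 : i + l + 1 - 1 = i + l := by omega
        simpa only [Nat.add_sub_cancel, e5] using h
      have e6 : i + 1 + l = i + l + 1 := by omega
      rw [e6]
      have e7 : 2*(i+l) - 2 = 2*(i+l) - 2 := rfl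
      rw [hd, hA1, hA2, hr]
    · have e1 : 2*(i+1) = 2*i+2 := by omega
      have e2 : 2*(i+1+l) - 1 = 2*(i+l)+1 := by omega
      rw [e1, e2]
      have hd := dbl (2*(i+l)+1) (by omega) (by omega)
      have hB1 := (ihh l hl1 (by omega)).2
      have hB2 := (ihh (l+1) (by omega) (by omega)).2
      have e3 : 2*(i+(l+1)) - 1 = 2*(i+l)+1 := by omega
      have e4 : n + 1 - (l+1) = n - l := by omega
      rw [e3, e4] at hB2
      have e5 : 2*(i+l)+1-2 = 2*(i+l) - 1 := by omega
      rw [e5] at hd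
      have hr : M (i+1) (n+1-l) = M i (n-l) + M i (n+1-l) := by
        have h := hM.2.2.2 (i+1) (n+1-l) (by omega) (by omega) (by omega)
        have e6 : n + 1 - l - 1 = n - l := by omega
        simpa only [Nat.add_sub_cancel, e6] using h
      rw [hd, hB1, hB2, hr]
      ring

lemma aux_tm_even (hn : 1 ≤ n) (hM : IsSteinhausAdj n S M) (ht : t ∈ ST (2*n-1))
    (hrow : FirstRow (2*n-1) t (antider n 0 (ir n S)))
    (i : ℕ) (hi1 : 1 ≤ i) (hi2 : i + 1 ≤ n) : t (2*i) (2*n-1) = M i (i+1) := by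
  have h := (aux_rowR hn hM ht hrow i hi1 hi2 (n-i) (by omega) (by omega)).2
  have e1 : 2*(i+(n-i)) - 1 = 2*n-1 := by omega
  have e2 : n + 1 - (n-i) = i+1 := by omega
  rw [e1, e2] at h
  exact h

lemma aux_tm1_even (hn : 1 ≤ n) (hM : IsSteinhausAdj n S M) (ht : t ∈ ST (2*n-1))
    (hrow : FirstRow (2*n-1) t (antider n 0 (ir n S)))
    (i : ℕ) (hi1 : 1 ≤ i) (hi2 : i + 1 ≤ n) : t (2*i) (2*n-2) = M i n := by
  have h := (aux_rowR hn hM ht hrow i hi1 hi2 (n-i) (by omega) (by omega)).1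
  have e1 : 2*(i+(n-i)) - 2 = 2*n-2 := by omega
  have e2 : i + (n-i) = n := by omega
  rw [e1, e2] at h
  exact h

lemma aux_tm_odd (hn : 1 ≤ n) (hM : IsSteinhausAdj n S M) (ht : t ∈ ST (2*n-1))
    (hrow : FirstRow (2*n-1) t (antider n 0 (ir n S)))
    (i : ℕ) (hi1 : 1 ≤ i) (hi2 : i + 1 ≤ n) :
    t (2*i+1) (2*n-1) = M i n + M i (i+1) := by
  have h := ht.2 (2*i+1) (2*n-1) (by omega) (by omega) le_rfl
  have e1 : 2*i+1-1 = 2*i := by omega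
  have e2 : 2*n-1-1 = 2*n-2 := by omega
  rw [e1, e2] at h
  rw [h, aux_tm_even hn hM ht hrow i hi1 hi2, aux_tm1_even hn hM ht hrow i hi1 hi2]

end Tlayer

section Final

variable {n : ℕ} {S : ℕ → ZMod 2} {M : ℕ → ℕ → ZMod 2} {t : ℕ → ℕ → ZMod 2}

lemma aux_hrefl_eq (hn : 1 ≤ n) (ht : t ∈ ST (2*n-1))
    (hrow : FirstRow (2*n-1) t (antider n 0 (ir n S))) : hrefl (2*n-1) t = t := by
  apply aux_ST_unique (aux_hrefl_mem ht) ht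
  intro j hj1 hj2
  have hin : InTri (2*n-1) 1 j := ⟨le_rfl, hj1, hj2⟩
  simp only [hrefl, if_pos hin]
  rw [hrow (2*n-1-j+1) (by omega) (by omega), hrow j hj1 hj2]
  exact aux_b_sym n hn S j hj1 hj2

lemma aux_rot_iff (hn : 1 ≤ n) (ht : t ∈ ST (2*n-1))
    (hrow : FirstRow (2*n-1) t (antider n 0 (ir n S))) :
    rot (2*n-1) t = t ↔
      ∀ j, 1 ≤ j → j ≤ 2*n-1 → t j (2*n-1) = antider n 0 (ir n S) j := by
  constructor
  · intro h j hj1 hj2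
    have hin : InTri (2*n-1) 1 j := ⟨le_rfl, hj1, hj2⟩
    have h1 := congrFun (congrFun h 1) j
    simp only [rot, if_pos hin] at h1
    have e1 : j - 1 + 1 = j := by omega
    have e2 : 2*n-1-1+1 = 2*n-1 := by omega
    rw [e1, e2] at h1
    rw [h1, hrow j hj1 hj2]
  · intro h
    apply aux_ST_unique (aux_rot_mem ht) ht
    intro j hj1 hj2
    have hin : InTri (2*n-1) 1 j := ⟨le_rfl, hj1, hj2⟩
    simp only [rot, if_pos hin]
    have e1 : j - 1 + 1 = j := by omega
    have e2 : 2*n-1-1+1 = 2*n-1 := by omega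
    rw [e1, e2, h j hj1 hj2, hrow j hj1 hj2]

lemma aux_b1 (hn : 1 ≤ n) :
    antider n 0 (ir n S) 1 = ∑ j ∈ Icc 1 (n-1), S j := by
  simp only [antider]
  rw [aux_sigma_eq n S]
  simp

lemma aux_b_even_step (i : ℕ) (hi : 1 ≤ i) :
    antider n 0 (ir n S) (2*i+1) = antider n 0 (ir n S) (2*i) + S (n - i) := by
  have h := aux_b_succ n S (2*i) (by omega)
  rw [h]
  congr 1
  simp only [ir]
  rw [if_neg (by omega)]
  congr 1
  omega

lemma aux_b_odd_step (i : ℕ) :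
    antider n 0 (ir n S) (2*i+2) = antider n 0 (ir n S) (2*i+1) + S (i+1) := by
  have h := aux_b_succ n S (2*i+1) (by omega)
  have e : 2*i+1+1 = 2*i+2 := by omega
  rw [e] at h
  rw [h]
  congr 1
  simp only [ir]
  rw [if_pos (by omega)]
  congr 1
  omega

/-- The rot condition in terms of `M` and the generating sequence. -/
lemma aux_rot_iff2 (hn : 1 ≤ n) (hM : IsSteinhausAdj n S M) (ht : t ∈ ST (2*n-1))
    (hrow : FirstRow (2*n-1) t (antider n 0 (ir n S))) :
    rot (2*n-1) t = t ↔
      ((∑ j ∈ Icc 1 (n-1), S j = 0) ∧ Ccond n M ∧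
        ∀ k, 1 ≤ k → k ≤ n - 1 → M k n = S (n - k)) := by
  rw [aux_rot_iff hn ht hrow]
  set b : ℕ → ZMod 2 := antider n 0 (ir n S) with hb
  have hPQ : (∀ j, 1 ≤ j → j ≤ 2*n-1 → t j (2*n-1) = b j) ↔
      ((∀ i, 1 ≤ i → i + 1 ≤ n → b (2*i) = M i (i+1)) ∧
       (∀ i, 1 ≤ i → i + 1 ≤ n → b (2*i+1) = M i n + M i (i+1))) := by
    constructor
    · intro h
      constructor
      · intro i h1 h2
        rw [← h (2*i) (by omega) (by omega), aux_tm_even hn hM ht hrow i h1 h2]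
      · intro i h1 h2
        rw [← h (2*i+1) (by omega) (by omega), aux_tm_odd hn hM ht hrow i h1 h2]
    · rintro ⟨hP, hQ⟩ j hj1 hj2
      rcases Nat.eq_or_lt_of_le hj1 with h1 | h1
      · -- j = 1
        rw [← h1]
        rw [hrow (2*n-1) (by omega) le_rfl]
        have hsym := aux_b_sym n hn S (2*n-1) (by omega) le_rfl
        have e : 2*n-1-(2*n-1)+1 = 1 := by omega
        rw [e, ← hb] at hsym
        exact hsym.symm
      · by_cases hpar : j % 2 = 0
        · have e : j = 2*(j/2) := by omega
          rw [e, aux_tm_even hn hM ht hrow (j/2) (by omega) (by omega),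
            hP (j/2) (by omega) (by omega)]
        · have e : j = 2*(j/2)+1 := by omega
          rw [e, aux_tm_odd hn hM ht hrow (j/2) (by omega) (by omega),
            hQ (j/2) (by omega) (by omega)]
  rw [hPQ]
  rcases Nat.eq_or_lt_of_le hn with hone | hn2
  · -- n = 1 : everything trivial
    constructor
    · intro _
      refine ⟨?_, ?_, ?_⟩
      · rw [← hone]; simp
      · intro k hk1 hk2; omega
      · intro k hk1 hk2; omega
    · intro _
      constructor
      · intro i h1 h2; omega
      · intro i h1 h2; omega
  · constructor
    · rintro ⟨hP, hQ⟩
      have hB : ∀ k, 1 ≤ k → k ≤ n - 1 → M k n = S (n - k) := by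
        intro k hk1 hk2
        have hp := hP k hk1 (by omega)
        have hq := hQ k hk1 (by omega)
        have hs := aux_b_even_step (S := S) (n := n) k hk1
        rw [← hb] at hs
        linear_combination -hq + hs + hp
      have hσ : ∑ j ∈ Icc 1 (n-1), S j = 0 := by
        have hp := hP 1 le_rfl hn2
        have hs := aux_b_odd_step (S := S) (n := n) 0
        rw [← hb] at hs
        simp only [Nat.mul_zero, Nat.zero_add] at hs
        have hm : M 1 2 = S 1 := by
          have h := hM.2.2.1 2 le_rfl hn2
          simpa using h
        rw [show (2:ℕ)*1 = 2 by omega] at hp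
        have hb1' : b 1 = ∑ j ∈ Icc 1 (n-1), S j := by rw [hb]; exact aux_b1 hn
        linear_combination -hb1' - hs + hp + hm
      refine ⟨hσ, ?_, hB⟩
      intro k hk1 hk2
      have hp1 := hP k hk1 (by omega)
      have hp2 := hP (k+1) (by omega) (by omega)
      have hs1 := aux_b_even_step (S := S) (n := n) k hk1
      have hs2 := aux_b_odd_step (S := S) (n := n) k
      rw [← hb] at hs1 hs2
      have hr : M (k+1) (k+2) = M k (k+1) + M k (k+2) := by
        have h := hM.2.2.2 (k+1) (k+2) (by omega) (by omega) (by omega)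
        have e2 : k + 2 - 1 = k + 1 := by omega
        simpa only [Nat.add_sub_cancel, e2] using h
      have hm : M 1 (k+2) = S (k+1) := by
        have h := hM.2.2.1 (k+2) (by omega) (by omega)
        have e2 : k + 2 - 1 = k + 1 := by omega
        rwa [e2] at h
      have hBk := hB k hk1 (by omega)
      have e3 : 2*(k+1) = 2*k+2 := by omega
      have e4 : k+1+1 = k+2 := by omega
      rw [e3, e4] at hp2
      -- b(2k+2) = b(2k+1) + S(k+1) = b(2k) + S(n-k) + S(k+1)
      -- M(k+1)(k+2) = M k (k+1) + S(n-k) + S(k+1)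
      -- so M k (k+2) = S(n-k) + S(k+1) = M k n + M 1 (k+2)
      linear_combination hBk - hm + hr + hp2 - hs2 - aux_z2 (S (k+1)) - hs1 - hp1
    · rintro ⟨hσ, hC, hB⟩
      have hP : ∀ i, 1 ≤ i → i + 1 ≤ n → b (2*i) = M i (i+1) := by
        intro i hi1
        induction i, hi1 using Nat.le_induction with
        | base =>
          intro h2
          have hs := aux_b_odd_step (S := S) (n := n) 0
          rw [← hb] at hs
          simp only [Nat.mul_zero, Nat.zero_add] at hs
          have hm : M 1 2 = S 1 := by
            have h := hM.2.2.1 2 le_rfl hn2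
            simpa using h
          have hb1' : b 1 = ∑ j ∈ Icc 1 (n-1), S j := by rw [hb]; exact aux_b1 hn
          rw [show (2:ℕ)*1 = 2 by omega]
          linear_combination hs + hb1' + hσ - hm
        | succ i hi ih =>
          intro h2
          have hp := ih (by omega)
          have hs1 := aux_b_even_step (S := S) (n := n) i hi
          have hs2 := aux_b_odd_step (S := S) (n := n) i
          rw [← hb] at hs1 hs2
          have hBi := hB i hi (by omega)
          have hCi := hC i hi (by omega)
          have hm : M 1 (i+2) = S (i+1) := by
            have h := hM.2.2.1 (i+2) (by omega) (by omega)
            have e2 : i + 2 - 1 = i + 1 := by omega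
            rwa [e2] at h
          have hr : M (i+1) (i+2) = M i (i+1) + M i (i+2) := by
            have h := hM.2.2.2 (i+1) (i+2) (by omega) (by omega) (by omega)
            have e2 : i + 2 - 1 = i + 1 := by omega
            simpa only [Nat.add_sub_cancel, e2] using h
          have e3 : 2*(i+1) = 2*i+2 := by omega
          have e4 : i + 1 + 1 = i + 2 := by omega
          rw [e3, e4]
          linear_combination hs2 + hs1 + hp - hr - hBi + hCi - hm + aux_z2 (M 1 (i+2))
      refine ⟨hP, ?_⟩
      intro i hi1 hi2
      have hs := aux_b_even_step (S := S) (n := n) i hi1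
      rw [← hb] at hs
      have hBi := hB i hi1 (by omega)
      rw [hs, hP i hi1 hi2, hBi]
      ring

end Final

/-- Theorem 3. For `n ≥ 1` and a sequence `S` of length
`n-1`, the Steinhaus graph `G(S)` (with adjacency matrix `M`) is even iff the
Steinhaus triangle `θ(G(S)) = ∇(∫_{n,0} ir(S))` of size `2n-1` (denoted `t`) is
dihedrally symmetric. -/
theorem statement17 (n : ℕ) (hn : 1 ≤ n) (S : ℕ → ZMod 2)
    (M : ℕ → ℕ → ZMod 2) (hM : IsSteinhausAdj n S M)
    (t : ℕ → ℕ → ZMod 2) (ht : t ∈ ST (2 * n - 1))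
    (hrow : FirstRow (2 * n - 1) t (antider n 0 (ir n S))) :
    EvenAdj n M ↔ (rot (2 * n - 1) t = t ∧ hrefl (2 * n - 1) t = t) := by
  constructor
  · intro hE
    refine ⟨?_, aux_hrefl_eq hn ht hrow⟩
    rw [aux_rot_iff2 hn hM ht hrow]
    obtain ⟨hσ, hC⟩ := (aux_even_iff hM hn).1 hE
    exact ⟨hσ, hC, aux_B hM hn hσ hC⟩
  · rintro ⟨hr, -⟩
    rw [aux_rot_iff2 hn hM ht hrow] at hr
    exact (aux_even_iff hM hn).2 ⟨hr.1, hr.2.1⟩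

end Steinhaus
end

section
/- Let n ≥ 1 and let S be a sequence over Z/2Z of length n-1 whose associated Steinhaus graph G(S) is even. Then the Steinhaus triangle ∇S = (a_{i,j})_{1≤i≤j≤n-1} is doubly symmetric: for every i ∈ {0,…,n-2}, the diagonal (a_{j,i+j})_{1≤j≤n-1-i} is symmetric, i.e. a_{j,i+j} = a_{n-i-j, n-j} for all j ∈ {1,…,n-1-i}. -/
open Finset

namespace SteinhausAux

/-- Infinite Steinhaus triangle with first row `S` (indexed from row 1). -/
def sT (S : ℕ → ZMod 2) : ℕ → ℕ → ZMod 2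
  | 0 => fun _ => 0
  | 1 => S
  | (i+2) => fun j => sT S (i+1) (j-1) + sT S (i+1) j

variable (S : ℕ → ZMod 2)

lemma sT_rec (i j : ℕ) (hi : 1 ≤ i) :
    sT S (i+1) j = sT S i (j-1) + sT S i j := by
  cases i with
  | zero => omega
  | succ k => rfl

lemma addflip {a b c : ZMod 2} (h : a = b + c) : b = a + c := by
  subst h; rw [add_assoc, CharTwo.add_self_eq_zero, add_zero]

lemma addflip' {a b c : ZMod 2} (h : a = b + c) : c = b + a := by
  rw [add_comm b c] at h; rw [add_comm b a]; exact addflip h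

lemma sT_succ (i j : ℕ) (hi : 1 ≤ i) :
    sT S (i+1) (j+1) = sT S i j + sT S i (j+1) := by
  simpa using sT_rec S i (j+1) hi

/-- char-2 telescoping sum. -/
lemma teleIco (h : ℕ → ZMod 2) {a b : ℕ} (hab : a ≤ b) :
    ∑ j ∈ Ico a b, (h j + h (j+1)) = h a + h b := by
  induction b, hab using Nat.le_induction with
  | base => simp [CharTwo.add_self_eq_zero]
  | succ b hb ih =>
      rw [Finset.sum_Ico_succ_top hb, ih]
      have := CharTwo.add_self_eq_zero (R := ZMod 2) (h b)
      linear_combination this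

/-- Column partial-sum identity. -/
lemma colsum (q : ℕ) :
    ∑ l ∈ Icc 1 q, sT S l q = sT S 1 (q+1) + sT S (q+1) (q+1) := by
  have h1 : Icc 1 q = Ico 1 (q+1) := by rw [Finset.Ico_add_one_right_eq_Icc]
  rw [h1]
  have h2 : ∀ l ∈ Ico 1 (q+1), sT S l q = sT S l (q+1) + sT S (l+1) (q+1) := by
    intro l hl
    simp only [mem_Ico] at hl
    rw [add_comm]; exact addflip (sT_succ S l q hl.1)
  rw [Finset.sum_congr rfl h2]
  exact teleIco (fun l => sT S l (q+1)) (by omega)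

/-- Row tail-sum identity. -/
lemma rowtail (p J : ℕ) (hp : 1 ≤ p) (hJ : p ≤ J) :
    ∑ j ∈ Icc (p+1) J, sT S (p+1) j = sT S p p + sT S p J := by
  have h1 : Icc (p+1) J = Ico (p+1) (J+1) := by rw [Finset.Ico_add_one_right_eq_Icc]
  have h2 : Ico (p+1) (J+1) = (Ico p J).map (addLeftEmbedding 1) := by
    rw [Finset.map_add_left_Ico]; congr 1 <;> omega
  rw [h1, h2, Finset.sum_map]
  have h3 : ∀ j ∈ Ico p J, sT S (p+1) (addLeftEmbedding 1 j)
      = sT S p j + sT S p (j+1) := by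
    intro j hj
    have : (addLeftEmbedding 1 j : ℕ) = j + 1 := by
      simp [addLeftEmbedding]; omega
    rw [this, sT_succ S p j hp]
  rw [Finset.sum_congr rfl h3]
  exact teleIco (fun j => sT S p j) hJ


/-- Pascal merge in char 2 (any `f`). -/
lemma pascalMerge (g : ℕ) (f : ℕ → ZMod 2) :
    (∑ r ∈ range (g+1), (Nat.choose g r : ZMod 2) * f r)
      + ∑ r ∈ range (g+1), (Nat.choose g r : ZMod 2) * f (r+1)
    = ∑ r ∈ range (g+2), (Nat.choose (g+1) r : ZMod 2) * f r := by
  rw [Finset.sum_range_succ' (fun r => (Nat.choose (g+1) r : ZMod 2) * f r) (g+1)]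
  have h1 : ∀ r ∈ range (g+1), (Nat.choose (g+1) (r+1) : ZMod 2) * f (r+1)
      = (Nat.choose g r : ZMod 2) * f (r+1) + (Nat.choose g (r+1) : ZMod 2) * f (r+1) := by
    intro r _
    rw [Nat.choose_succ_succ']
    push_cast
    ring
  rw [Finset.sum_congr rfl h1, Finset.sum_add_distrib]
  have h2 : ∑ r ∈ range (g+1), (Nat.choose g (r+1) : ZMod 2) * f (r+1)
      = ∑ r ∈ range (g+2), (Nat.choose g r : ZMod 2) * f r
        + (Nat.choose g 0 : ZMod 2) * f 0 := by
    rw [Finset.sum_range_succ' (fun r => (Nat.choose g r : ZMod 2) * f r) (g+1)]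
    rw [add_assoc, CharTwo.add_self_eq_zero, add_zero]
  rw [h2]
  have h3 : ∑ r ∈ range (g+2), (Nat.choose g r : ZMod 2) * f r
      = ∑ r ∈ range (g+1), (Nat.choose g r : ZMod 2) * f r := by
    rw [Finset.sum_range_succ, Nat.choose_succ_self]
    push_cast; ring
  rw [h3]
  simp only [Nat.choose_zero_right, Nat.cast_one, one_mul]
  have := CharTwo.add_self_eq_zero (R := ZMod 2) (f 0)
  linear_combination -this

/-- Expansion of an entry toward a farther column. -/
lemma expandCol (g : ℕ) : ∀ p q : ℕ, 1 ≤ p → p ≤ q →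
    sT S p q = ∑ r ∈ range (g+1), (Nat.choose g r : ZMod 2) * sT S (p+r) (q+g) := by
  induction g with
  | zero => intro p q _ _; simp
  | succ g ih =>
      intro p q hp hpq
      have key : sT S p q = sT S p (q+1) + sT S (p+1) (q+1) := by
        rw [add_comm]; exact addflip (sT_succ S p q hp)
      rw [key, ih p (q+1) hp (by omega), ih (p+1) (q+1) (by omega) (by omega)]
      have h1 : ∀ r ∈ range (g+1), (Nat.choose g r : ZMod 2) * sT S (p+1+r) (q+1+g)
          = (Nat.choose g r : ZMod 2) * sT S (p+(r+1)) (q+1+g) := by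
        intro r _; congr 2; omega
      rw [Finset.sum_congr rfl h1]
      have := pascalMerge g (fun k => sT S (p+k) (q+1+g))
      rw [this]
      apply Finset.sum_congr rfl
      intro r _
      congr 2
      omega

/-- Expansion of an entry from the first row. -/
lemma expandRow1 : ∀ p q : ℕ, 1 ≤ p → p ≤ q →
    sT S p q = ∑ r ∈ range p, (Nat.choose (p-1) r : ZMod 2) * sT S 1 (q-r) := by
  intro p
  induction p with
  | zero => omega
  | succ p ih =>
      intro q hp hpq
      rcases Nat.eq_or_lt_of_le (show 1 ≤ p + 1 from hp) with h1 | h1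
      · simp [← h1]
      · have hp1 : 1 ≤ p := by omega
        rw [sT_rec S p q hp1, ih (q-1) hp1 (by omega), ih q hp1 (by omega)]
        have h2 : ∀ r ∈ range p, (Nat.choose (p-1) r : ZMod 2) * sT S 1 (q-1-r)
            = (Nat.choose (p-1) r : ZMod 2) * sT S 1 (q-(r+1)) := by
          intro r _; congr 2; omega
        rw [Finset.sum_congr rfl h2]
        obtain ⟨p', rfl⟩ : ∃ p', p = p' + 1 := ⟨p - 1, by omega⟩
        have := pascalMerge p' (fun k => sT S 1 (q-k))
        simp only [Nat.add_sub_cancel]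
        rw [add_comm, this]

/-- Expansion of an entry from the left diagonal. -/
lemma expandDiag (g : ℕ) : ∀ p : ℕ, 1 ≤ p →
    sT S p (p+g) = ∑ r ∈ range (g+1), (Nat.choose g r : ZMod 2) * sT S (p+r) (p+r) := by
  induction g with
  | zero => intro p _; simp
  | succ g ih =>
      intro p hp
      have key : sT S p (p+g+1) = sT S p (p+g) + sT S (p+1) (p+g+1) := by
        exact addflip' (sT_succ S p (p+g) hp)
      have e1 : p + (g+1) = p + g + 1 := by omega
      rw [e1, key, ih p hp]
      have e2 : p + g + 1 = (p+1) + g := by omega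
      rw [e2, ih (p+1) (by omega)]
      have h1 : ∀ r ∈ range (g+1), (Nat.choose g r : ZMod 2) * sT S (p+1+r) (p+1+r)
          = (Nat.choose g r : ZMod 2) * sT S (p+(r+1)) (p+(r+1)) := by
        intro r _; congr 2 <;> omega
      rw [Finset.sum_congr rfl h1]
      exact pascalMerge g (fun k => sT S (p+k) (p+k))


section Bridges
variable {n : ℕ} {M : ℕ → ℕ → ZMod 2} {a : ℕ → ℕ → ZMod 2}

lemma sum_eq_card (s : Finset ℕ) (f : ℕ → ZMod 2) :
    ∑ x ∈ s, f x = ((s.filter (fun x => f x = 1)).card : ZMod 2) := by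
  rw [← Finset.sum_filter_add_sum_filter_not s (fun x => f x = 1)]
  have h2 : ∑ x ∈ s.filter (fun x => ¬ f x = 1), f x = 0 := by
    apply Finset.sum_eq_zero
    intro x hx
    simp only [Finset.mem_filter] at hx
    have : ∀ y : ZMod 2, y ≠ 1 → y = 0 := by decide
    exact this _ hx.2
  have h1 : ∑ x ∈ s.filter (fun x => f x = 1), f x
      = ((s.filter (fun x => f x = 1)).card : ZMod 2) := by
    rw [Finset.sum_congr rfl (fun x hx => (Finset.mem_filter.mp hx).2)]
    simp
  rw [h1, h2, add_zero]

lemma evenCast {c : ℕ} (h : Even c) : (c : ZMod 2) = 0 := by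
  obtain ⟨k, rfl⟩ := h
  push_cast
  rw [← two_mul]
  have h2 : (2 : ZMod 2) = 0 := rfl
  rw [h2, zero_mul]

lemma Mbridge (hM : Steinhaus.IsSteinhausAdj n S M) :
    ∀ p l, 1 ≤ p → p < l → l ≤ n → M p l = sT S p (l-1) := by
  intro p
  induction p with
  | zero => omega
  | succ p ih =>
      intro l hp hpl hln
      rcases Nat.eq_zero_or_pos p with rfl | hp1
      · rw [hM.2.2.1 l (by omega) hln]; rfl
      · rw [hM.2.2.2 (p+1) l (by omega) hpl hln]
        simp only [Nat.add_sub_cancel]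
        rw [ih (l-1) (by omega) (by omega) (by omega), ih l (by omega) (by omega) hln]
        rw [sT_rec S p (l-1) hp1]

lemma abridge (ha : a ∈ Steinhaus.ST (n-1)) (hrow : Steinhaus.FirstRow (n-1) a S) :
    ∀ p q, 1 ≤ p → p ≤ q → q ≤ n-1 → a p q = sT S p q := by
  intro p
  induction p with
  | zero => omega
  | succ p ih =>
      intro q hp hpq hq
      rcases Nat.eq_zero_or_pos p with rfl | hp1
      · rw [hrow q (by omega) hq]; rfl
      · rw [ha.2 (p+1) q (by omega) hpq hq]
        simp only [Nat.add_sub_cancel]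
        rw [ih (q-1) hp1 (by omega) (by omega), ih q hp1 (by omega) hq]
        rw [sT_rec S p q hp1]

/-- Evenness at vertex `p`, in triangle language. -/
lemma degsum (hM : Steinhaus.IsSteinhausAdj n S M) (hE : Steinhaus.EvenAdj n M)
    (p : ℕ) (hp1 : 1 ≤ p) (hpn : p ≤ n) :
    (∑ l ∈ Icc 1 (p-1), sT S l (p-1)) + (∑ j ∈ Icc p (n-1), sT S p j) = 0 := by
  have h0 : ∑ l ∈ Icc 1 n, M p l = 0 := by
    rw [sum_eq_card]; exact evenCast (hE p hp1 hpn)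
  have hIcc : Icc 1 n = Ico 1 (n+1) := by rw [Finset.Ico_add_one_right_eq_Icc]
  rw [hIcc] at h0
  rw [← Finset.sum_Ico_consecutive (fun l => M p l) (by omega : 1 ≤ p)
    (by omega : p ≤ n+1)] at h0
  rw [Finset.sum_eq_sum_Ico_succ_bot (by omega : p < n+1) (fun l => M p l)] at h0
  rw [hM.2.1 p hp1 hpn] at h0
  have e1 : ∑ l ∈ Ico 1 p, M p l = ∑ l ∈ Icc 1 (p-1), sT S l (p-1) := by
    have : Icc 1 (p-1) = Ico 1 p := by rw [← Finset.Ico_add_one_right_eq_Icc]; congr 1; omega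
    rw [this]
    apply Finset.sum_congr rfl
    intro l hl
    simp only [mem_Ico] at hl
    rw [hM.1 p l hp1 hpn hl.1 (by omega)]
    exact Mbridge S hM l p hl.1 hl.2 hpn
  have e2 : ∑ l ∈ Ico (p+1) (n+1), M p l = ∑ j ∈ Icc p (n-1), sT S p j := by
    have h2 : Ico (p+1) (n+1) = (Ico p n).map (addLeftEmbedding 1) := by
      rw [Finset.map_add_left_Ico]; congr 1 <;> omega
    rw [h2, Finset.sum_map]
    have : Icc p (n-1) = Ico p n := by rw [← Finset.Ico_add_one_right_eq_Icc]; congr 1; omega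
    rw [this]
    apply Finset.sum_congr rfl
    intro j hj
    simp only [mem_Ico] at hj
    have hemb : (addLeftEmbedding 1 j : ℕ) = j + 1 := by
      simp [addLeftEmbedding]; omega
    rw [hemb, Mbridge S hM p (j+1) hp1 (by omega) (by omega)]
    norm_num
  rw [e1, e2] at h0
  linear_combination h0

/-- Corollary of evenness: last-column entries via first row and diagonal. -/
lemma Ecor (hM : Steinhaus.IsSteinhausAdj n S M) (hE : Steinhaus.EvenAdj n M)
    (q : ℕ) (hq1 : 1 ≤ q) (hq : q ≤ n-1) :
    sT S q (n-1) = sT S 1 (q+1) + sT S q q + sT S (q+1) (q+1) := by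
  have h0 := degsum S hM hE (q+1) (by omega) (by omega)
  simp only [Nat.add_sub_cancel] at h0
  rw [colsum S q, rowtail S q (n-1) hq1 hq] at h0
  have ca := CharTwo.add_self_eq_zero (R := ZMod 2) (sT S 1 (q+1))
  have cb := CharTwo.add_self_eq_zero (R := ZMod 2) (sT S q q)
  have cc := CharTwo.add_self_eq_zero (R := ZMod 2) (sT S (q+1) (q+1))
  linear_combination h0 - ca - cb - cc

/-- Core: the anti-diagonal of an even Steinhaus matrix vanishes. -/
lemma antidiag (hM : Steinhaus.IsSteinhausAdj n S M) (hE : Steinhaus.EvenAdj n M) :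
    ∀ i, 1 ≤ i → 2*i ≤ n → sT S i (n-i) = 0 := by
  intro i hi h2i
  obtain ⟨k, rfl⟩ : ∃ k, i = k+1 := ⟨i-1, by omega⟩
  have h1 : sT S (k+1) (n-(k+1)) = ∑ r ∈ range (k+1),
      (Nat.choose k r : ZMod 2) * sT S (k+1+r) (n-1) := by
    have h := expandCol S k (k+1) (n-(k+1)) (by omega) (by omega)
    have hcol : (n-(k+1)) + k = n-1 := by omega
    rw [hcol] at h
    exact h
  have h2 : ∀ r ∈ range (k+1), (Nat.choose k r : ZMod 2) * sT S (k+1+r) (n-1)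
      = (Nat.choose k r : ZMod 2) * sT S 1 (k+1+r+1)
        + ((Nat.choose k r : ZMod 2) * sT S (k+1+r) (k+1+r)
          + (Nat.choose k r : ZMod 2) * sT S (k+1+r+1) (k+1+r+1)) := by
    intro r hr
    simp only [mem_range] at hr
    rw [Ecor S hM hE (k+1+r) (by omega) (by omega)]
    ring
  rw [h1, Finset.sum_congr rfl h2, Finset.sum_add_distrib]
  have e1 : ∑ r ∈ range (k+1), (Nat.choose k r : ZMod 2) * sT S 1 (k+1+r+1)
      = sT S (k+1) ((k+1)+(k+1)) := by
    rw [expandRow1 S (k+1) ((k+1)+(k+1)) (by omega) (by omega)]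
    simp only [Nat.add_sub_cancel]
    rw [← Finset.sum_range_reflect
      (fun r => (Nat.choose k r : ZMod 2) * sT S 1 ((k+1)+(k+1)-r)) (k+1)]
    apply Finset.sum_congr rfl
    intro r hr
    simp only [mem_range] at hr
    have hkr : k + 1 - 1 - r = k - r := by omega
    rw [hkr]
    have hc : Nat.choose k (k - r) = Nat.choose k r := Nat.choose_symm (by omega)
    rw [hc]
    congr 2
    omega
  have e2 : (∑ r ∈ range (k+1), (Nat.choose k r : ZMod 2) * sT S (k+1+r) (k+1+r))
      + ∑ r ∈ range (k+1), (Nat.choose k r : ZMod 2) * sT S (k+1+r+1) (k+1+r+1)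
      = sT S (k+1) ((k+1)+(k+1)) := by
    have pm := pascalMerge k (fun t => sT S (k+1+t) (k+1+t))
    simp only [← Nat.add_assoc] at pm
    rw [pm, expandDiag S (k+1) (k+1) (by omega)]
  rw [Finset.sum_add_distrib, e1, e2]
  exact CharTwo.add_self_eq_zero _

lemma betaDown (hM : Steinhaus.IsSteinhausAdj n S M) (hE : Steinhaus.EvenAdj n M) :
    ∀ d p q, 1 ≤ p → p ≤ q → q ≤ n-1 → p + q + d = n →
      sT S p q = sT S (n-q) (n-p) := by
  intro d
  induction d using Nat.strong_induction_on with
  | _ d ih =>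
    intro p q hp hpq hq hsum
    match d, ih with
    | 0, _ =>
      have e1 : n - q = p := by omega
      have e2 : n - p = q := by omega
      rw [e1, e2]
    | 1, _ =>
      have e1 : n - q = p+1 := by omega
      have e2 : n - p = q+1 := by omega
      rw [e1, e2, sT_succ S p q hp]
      have hz : sT S p (q+1) = 0 := by
        have hq1 : q + 1 = n - p := by omega
        rw [hq1]
        exact antidiag S hM hE p hp (by omega)
      rw [hz, add_zero]
    | (d+2), ih =>
      have ha1 := ih (d+1) (by omega) p (q+1) hp (by omega) (by omega) (by omega)
      have ha2 := ih d (by omega) (p+1) (q+1) (by omega) (by omega) (by omega) (by omega)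
      have hb : sT S (n-q) (n-p) = sT S (n-(q+1)) (n-(p+1)) + sT S (n-(q+1)) (n-p) := by
        have e1 : n - q = (n-(q+1)) + 1 := by omega
        have e2 : n - p = (n-(p+1)) + 1 := by omega
        rw [e1, e2]
        exact sT_succ S (n-(q+1)) (n-(p+1)) (by omega)
      rw [hb, ← ha1, ← ha2]
      exact addflip (sT_succ S p q hp)

lemma betaUp (hM : Steinhaus.IsSteinhausAdj n S M) (hE : Steinhaus.EvenAdj n M) :
    ∀ e p q, 1 ≤ p → p ≤ q → q ≤ n-1 → p + q = (n-1) + e →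
      sT S p q = sT S (n-q) (n-p) := by
  intro e
  induction e using Nat.strong_induction_on with
  | _ e ih =>
    intro p q hp hpq hq hsum
    match e, ih with
    | 0, _ => exact betaDown S hM hE 1 p q hp hpq hq (by omega)
    | 1, _ => exact betaDown S hM hE 0 p q hp hpq hq (by omega)
    | (e+2), ih =>
      obtain ⟨p', rfl⟩ : ∃ p', p = p'+1 := ⟨p-1, by omega⟩
      obtain ⟨q', rfl⟩ : ∃ q', q = q'+1 := ⟨q-1, by omega⟩
      have hp' : 1 ≤ p' := by omega
      have E1 := sT_succ S p' q' hp'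
      have E2 := sT_succ S (n-(q'+1)) (n-(p'+1)) (by omega)
      have IH1 := ih e (by omega) p' q' hp' (by omega) (by omega) (by omega)
      have IH2 := ih (e+1) (by omega) p' (q'+1) hp' (by omega) (by omega) (by omega)
      have r1 : n - q' = (n-(q'+1)) + 1 := by omega
      have r2 : n - p' = (n-(p'+1)) + 1 := by omega
      rw [r1, r2] at IH1
      rw [r2] at IH2
      have c := CharTwo.add_self_eq_zero (R := ZMod 2) (sT S (n-(q'+1)) ((n-(p'+1))+1))
      linear_combination E1 + E2 + IH1 + IH2 + c

end Bridges

theorem main19 {n : ℕ} (hn : 1 ≤ n) (S : ℕ → ZMod 2)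
    (M : ℕ → ℕ → ZMod 2) (hM : Steinhaus.IsSteinhausAdj n S M)
    (hE : Steinhaus.EvenAdj n M)
    (a : ℕ → ℕ → ZMod 2) (ha : a ∈ Steinhaus.ST (n - 1))
    (hrow : Steinhaus.FirstRow (n - 1) a S) :
    ∀ i j, i ≤ n - 2 → 1 ≤ j → j ≤ n - 1 - i →
      a j (i + j) = a (n - i - j) (n - j) := by
  intro i j hi hj1 hj2
  have hij : i + j ≤ n - 1 := by omega
  have hbr := abridge S ha hrow
  have g1 : a j (i+j) = sT S j (i+j) := hbr j (i+j) hj1 (by omega) hij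
  have g2 : a (n-i-j) (n-j) = sT S (n-i-j) (n-j) :=
    hbr _ _ (by omega) (by omega) (by omega)
  rw [g1, g2]
  have key : sT S j (i+j) = sT S (n-(i+j)) (n-j) := by
    rcases le_or_gt (n-1) (j + (i+j)) with h | h
    · exact betaUp S hM hE (j + (i+j) - (n-1)) j (i+j) hj1 (by omega) hij (by omega)
    · exact betaDown S hM hE (n - (j + (i+j))) j (i+j) hj1 (by omega) hij (by omega)
  rw [key, Nat.sub_sub]

end SteinhausAux


namespace Steinhaus

/-- **Statement 19** (Corollary, doubly symmetric matrices). If the Steinhaus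
graph `G(S)` of order `n` (adjacency matrix `M`) is even, then the Steinhaus
triangle `∇S = (a_{i,j})_{1≤i≤j≤n-1}` is doubly symmetric: all its diagonals
are symmetric, i.e. `a_{j,i+j} = a_{n-i-j,n-j}` for `i ∈ {0,…,n-2}` and
`j ∈ {1,…,n-1-i}`. -/
theorem statement19 (n : ℕ) (hn : 1 ≤ n) (S : ℕ → ZMod 2)
    (M : ℕ → ℕ → ZMod 2) (hM : IsSteinhausAdj n S M) (hE : EvenAdj n M)
    (a : ℕ → ℕ → ZMod 2) (ha : a ∈ ST (n - 1)) (hrow : FirstRow (n - 1) a S) :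
    ∀ i j, i ≤ n - 2 → 1 ≤ j → j ≤ n - 1 - i →
      a j (i + j) = a (n - i - j) (n - j) :=
  SteinhausAux.main19 hn S M hM hE a ha hrow

end Steinhaus
end
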